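/- Let (B, L, θ) be a Boolean dynamical system. If H is a hereditary saturated ideal of B such that the quotient Boolean dynamical system (B/H, L, θ) does not satisfy Condition (L), then there exists a cyclic maximal tail T with T ∩ H = ∅. -/

import Mathlib

/-- An ideal of a (generalized) Boolean algebra: a non-empty subset closed under
union and under intersection with arbitrary elements. -/
def IsBoolIdeal {B : Type*} [GeneralizedBooleanAlgebra B] (I : Set B) : Prop :=
  I.Nonempty ∧ (∀ a ∈ I, ∀ b ∈ I, a ⊔ b ∈ I) ∧ (∀ a ∈ I, ∀ b : B, a ⊓ b ∈ I)

/-- A filter in a (generalized) Boolean algebra. -/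
def IsBoolFilter {B : Type*} [GeneralizedBooleanAlgebra B] (ξ : Set B) : Prop :=
  ξ.Nonempty ∧ ⊥ ∉ ξ ∧ (∀ a ∈ ξ, ∀ b : B, a ≤ b → b ∈ ξ) ∧ (∀ a ∈ ξ, ∀ b ∈ ξ, a ⊓ b ∈ ξ)

/-- An ultrafilter of a (generalized) Boolean algebra. -/
def IsBoolUltrafilter {B : Type*} [GeneralizedBooleanAlgebra B] (ξ : Set B) : Prop :=
  IsBoolFilter ξ ∧ ∀ a ∈ ξ, ∀ b b' : B, a = b ⊔ b' → b ∈ ξ ∨ b' ∈ ξ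

/-- The relation `A ~ B ⟺ A ∪ A' = B ∪ B'` for some `A', B' ∈ I`. -/
def relI {B : Type*} [GeneralizedBooleanAlgebra B] (I : Set B) (a b : B) : Prop :=
  ∃ a' ∈ I, ∃ b' ∈ I, a ⊔ a' = b ⊔ b'

/-- The action of a finite word `α ∈ L*`: `θ_α = θ_{α_n} ∘ ⋯ ∘ θ_{α_1}`. -/
def wordAct {B L : Type*} (θ : L → B → B) (α : List L) (A : B) : B :=
  α.foldl (fun x a => θ a x) A

/-- `α^k`: the word `α` concatenated with itself `k` times. -/
def wordPow {L : Type*} (α : List L) (k : ℕ) : List L := (List.replicate k α).flatten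

/-- A Boolean dynamical system: a Boolean algebra `B`, a set `L`, and actions
`θ_a` on `B` (Boolean homomorphisms with `θ_a ⊥ = ⊥`) such that each word
action has compact range and closed domain. -/
structure BoolDynSys (B L : Type*) [GeneralizedBooleanAlgebra B] where
  θ : L → B → B
  map_inf : ∀ (a : L) (A A' : B), θ a (A ⊓ A') = θ a A ⊓ θ a A'
  map_sup : ∀ (a : L) (A A' : B), θ a (A ⊔ A') = θ a A ⊔ θ a A'
  map_sdiff : ∀ (a : L) (A A' : B), θ a (A \ A') = θ a A \ θ a A'
  map_bot : ∀ a : L, θ a ⊥ = ⊥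
  compactRange : ∀ α : List L, α ≠ [] → ∃ R : B, IsLUB (Set.range (wordAct θ α)) R
  closedDomain : ∀ α : List L, α ≠ [] → ∀ R : B, IsLUB (Set.range (wordAct θ α)) R →
      ∃ D : B, wordAct θ α D = R

section BDS
variable {B L : Type*} [GeneralizedBooleanAlgebra B]

/-- `Δ_A = {a ∈ L : θ_a(A) ≠ ∅}`. -/
def DeltaSet (S : BoolDynSys B L) (A : B) : Set L := {a : L | S.θ a A ≠ ⊥}

/-- `A` is regular if every non-empty `C ⊆ A` has `0 < |Δ_C| < ∞`. -/
def RegularElt (S : BoolDynSys B L) (A : B) : Prop :=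
  ∀ C : B, C ≤ A → C ≠ ⊥ → (DeltaSet S C).Finite ∧ (DeltaSet S C).Nonempty

/-- An ultrafilter cycle `(α, η)`: `θ_α(A) ∈ η` for all `A ∈ η`. -/
def IsUFCycle (S : BoolDynSys B L) (α : List L) (η : Set B) : Prop :=
  α ≠ [] ∧ IsBoolUltrafilter η ∧ ∀ A ∈ η, wordAct S.θ α A ∈ η

/-- A cycle `(α, A)`: `θ_α(C) = C` for all `C ⊆ A`. -/
def IsCycle (S : BoolDynSys B L) (α : List L) (A : B) : Prop :=
  α ≠ [] ∧ A ≠ ⊥ ∧ ∀ C : B, C ≤ A → wordAct S.θ α C = C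

/-- The cycle `(α, A)` has no exits: for all `t ≤ |α|` and all non-empty
`C ⊆ θ_{α₁⋯α_t}(A)`, `C` is regular with `Δ_C = {α_{t+1}}` (indices mod `|α|`). -/
def NoExits (S : BoolDynSys B L) (α : List L) (A : B) : Prop :=
  ∀ t : ℕ, ∀ _h1 : 1 ≤ t, ∀ h2 : t ≤ α.length, ∀ C : B, C ≠ ⊥ →
    C ≤ wordAct S.θ (α.take t) A →
    RegularElt S C ∧
      DeltaSet S C = {α.get ⟨t % α.length, Nat.mod_lt t (Nat.lt_of_lt_of_le _h1 h2)⟩}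

/-- The cycle `(α, A)` has an exit. -/
def HasExit (S : BoolDynSys B L) (α : List L) (A : B) : Prop :=
  ∃ t : ℕ, ∃ _h1 : 1 ≤ t, ∃ h2 : t ≤ α.length, ∃ C : B, C ≠ ⊥ ∧
    C ≤ wordAct S.θ (α.take t) A ∧
    DeltaSet S C ≠ {α.get ⟨t % α.length, Nat.mod_lt t (Nat.lt_of_lt_of_le _h1 h2)⟩}

/-- Condition (L): every cycle has an exit. -/
def ConditionL (S : BoolDynSys B L) : Prop :=
  ∀ (α : List L) (A : B), IsCycle S α A → HasExit S α A

/-- A hereditary subset: closed under the actions. -/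
def IsHereditary (S : BoolDynSys B L) (H : Set B) : Prop :=
  ∀ A ∈ H, ∀ a : L, S.θ a A ∈ H

/-- A saturated subset: `A ∈ H` whenever `A` is regular and `θ_a(A) ∈ H` for all `a`. -/
def IsSaturated (S : BoolDynSys B L) (H : Set B) : Prop :=
  ∀ A : B, RegularElt S A → (∀ a : L, S.θ a A ∈ H) → A ∈ H

/-- A maximal tail: conditions (T0)–(T5). -/
def IsMaximalTail (S : BoolDynSys B L) (T : Set B) : Prop :=
  T.Nonempty ∧
  (⊥ ∉ T) ∧
  (∀ A : B, ∀ a : L, S.θ a A ∈ T → A ∈ T) ∧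
  (∀ A C : B, A ⊔ C ∈ T → A ∈ T ∨ C ∈ T) ∧
  (∀ A ∈ T, ∀ C : B, A ≤ C → C ∈ T) ∧
  (∀ A ∈ T, RegularElt S A → ∃ a : L, S.θ a A ∈ T) ∧
  (∀ A₁ ∈ T, ∀ A₂ ∈ T, ∃ C ∈ T,
      (∃ α : List L, C ≤ wordAct S.θ α A₁) ∧ (∃ β : List L, C ≤ wordAct S.θ β A₂))

/-- A cyclic maximal tail. -/
def IsCyclicMaximalTail (S : BoolDynSys B L) (T : Set B) : Prop :=
  IsMaximalTail S T ∧
  ∃ (α : List L) (η : Set B) (A : B), IsUFCycle S α η ∧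
    T = {C : B | ∃ β : List L, wordAct S.θ β C ∈ η} ∧ A ∈ η ∧
    ∀ β : List L, β ≠ [] → ∀ C : B, C ≤ A → wordAct S.θ β C ∈ η →
      C ∈ η ∧ ∃ k : ℕ, 0 < k ∧ β = wordPow α k

/-- Condition (K). -/
def ConditionK (S : BoolDynSys B L) : Prop :=
  ¬ ∃ (α : List L) (η : Set B) (A : B), IsUFCycle S α η ∧ A ∈ η ∧
    ∀ β : List L, β ≠ [] → ∀ C : B, C ≤ A → wordAct S.θ β C ∈ η →
      C ∈ η ∧ ∃ k : ℕ, 0 < k ∧ β = wordPow α k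

/-! Notions for the quotient Boolean dynamical system `(B/H, L, θ)` (for a
hereditary saturated ideal `H`), expressed in terms of representatives in `B`. -/

/-- `[C] ⊆ [B']` in `B/H`. -/
def qle (H : Set B) (C A : B) : Prop := ∃ W ∈ H, C ≤ A ⊔ W

/-- `Δ_{[C]}` in `B/H`. -/
def QDelta (S : BoolDynSys B L) (H : Set B) (C : B) : Set L := {a : L | S.θ a C ∉ H}

/-- `[A]` is regular in `B/H`. -/
def QRegular (S : BoolDynSys B L) (H : Set B) (A : B) : Prop :=
  ∀ C : B, C ∉ H → qle H C A → (QDelta S H C).Finite ∧ (QDelta S H C).Nonempty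

/-- `(α, [A])` is a cycle in the quotient `(B/H, L, θ)`. -/
def QCycle (S : BoolDynSys B L) (H : Set B) (α : List L) (A : B) : Prop :=
  α ≠ [] ∧ A ∉ H ∧ ∀ C : B, qle H C A → relI H (wordAct S.θ α C) C

/-- The cycle `(α, [A])` has an exit in the quotient `(B/H, L, θ)`. -/
def QHasExit (S : BoolDynSys B L) (H : Set B) (α : List L) (A : B) : Prop :=
  ∃ t : ℕ, ∃ _h1 : 1 ≤ t, ∃ h2 : t ≤ α.length, ∃ C : B, C ∉ H ∧
    qle H C (wordAct S.θ (α.take t) A) ∧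
    QDelta S H C ≠ {α.get ⟨t % α.length, Nat.mod_lt t (Nat.lt_of_lt_of_le _h1 h2)⟩}

/-- The quotient `(B/H, L, θ)` satisfies Condition (L). -/
def QConditionL (S : BoolDynSys B L) (H : Set B) : Prop :=
  ∀ (α : List L) (A : B), QCycle S H α A → QHasExit S H α A

end BDS
namespace CT
variable {B L : Type*} [GeneralizedBooleanAlgebra B]

section Ideal
variable {H : Set B}

lemma bot_mem (hI : IsBoolIdeal H) : (⊥ : B) ∈ H := by
  obtain ⟨⟨a, ha⟩, -, hinf⟩ := hI
  simpa using hinf a ha ⊥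

lemma le_mem (hI : IsBoolIdeal H) {x h : B} (hh : h ∈ H) (hx : x ≤ h) : x ∈ H := by
  have := hI.2.2 h hh x
  rwa [inf_eq_right.mpr hx] at this

lemma sup_mem (hI : IsBoolIdeal H) {x y : B} (hx : x ∈ H) (hy : y ∈ H) : x ⊔ y ∈ H :=
  hI.2.1 x hx y hy

lemma qle_iff {x y : B} (hI : IsBoolIdeal H) : qle H x y ↔ x \ y ∈ H := by
  constructor
  · rintro ⟨W, hW, hle⟩
    exact le_mem hI hW (by simpa using sdiff_le_sdiff_right (c := y) hle)
  · intro h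
    exact ⟨x \ y, h, by rw [sup_sdiff_self_right]; exact le_sup_right⟩

lemma relI_iff {x y : B} (hI : IsBoolIdeal H) :
    relI H x y ↔ x \ y ∈ H ∧ y \ x ∈ H := by
  constructor
  · rintro ⟨a, ha, b, hb, heq⟩
    constructor
    · exact le_mem hI hb (by
        have : x ≤ y ⊔ b := heq ▸ le_sup_left
        simpa using sdiff_le_sdiff_right (c := y) this)
    · exact le_mem hI ha (by
        have : y ≤ x ⊔ a := heq.symm ▸ le_sup_left
        simpa using sdiff_le_sdiff_right (c := x) this)
  · rintro ⟨h1, h2⟩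
    exact ⟨y \ x, h2, x \ y, h1, by rw [sup_sdiff_self_right, sup_sdiff_self_right, sup_comm]⟩

lemma qle_of_le (hI : IsBoolIdeal H) {x y : B} (h : x ≤ y) : qle H x y :=
  (qle_iff hI).mpr (by rw [sdiff_eq_bot_iff.mpr h]; exact bot_mem hI)

lemma qle_trans (hI : IsBoolIdeal H) {x y z : B} (h1 : qle H x y) (h2 : qle H y z) :
    qle H x z := by
  rw [qle_iff hI] at *
  exact le_mem hI (sup_mem hI h1 h2) (sdiff_triangle x y z)

lemma relI_refl (hI : IsBoolIdeal H) (x : B) : relI H x x :=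
  (relI_iff hI).mpr ⟨by simpa using bot_mem hI, by simpa using bot_mem hI⟩

lemma relI_symm (hI : IsBoolIdeal H) {x y : B} (h : relI H x y) : relI H y x := by
  rw [relI_iff hI] at *; exact ⟨h.2, h.1⟩

lemma relI_trans (hI : IsBoolIdeal H) {x y z : B} (h1 : relI H x y) (h2 : relI H y z) :
    relI H x z := by
  rw [relI_iff hI] at *
  exact ⟨le_mem hI (sup_mem hI h1.1 h2.1) (sdiff_triangle x y z),
    le_mem hI (sup_mem hI h2.2 h1.2) (sdiff_triangle z y x)⟩

lemma qle_of_relI (hI : IsBoolIdeal H) {x y : B} (h : relI H x y) : qle H x y :=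
  (qle_iff hI).mpr ((relI_iff hI).mp h).1

lemma qle_congr_right (hI : IsBoolIdeal H) {x y z : B} (h1 : qle H x y) (h2 : relI H y z) :
    qle H x z := qle_trans hI h1 (qle_of_relI hI h2)

lemma relI_of_qle_qle (hI : IsBoolIdeal H) {x y : B} (h1 : qle H x y) (h2 : qle H y x) :
    relI H x y := (relI_iff hI).mpr ⟨(qle_iff hI).mp h1, (qle_iff hI).mp h2⟩

end Ideal

section WordAct
variable (S : BoolDynSys B L)

lemma wordAct_nil (A : B) : wordAct S.θ [] A = A := rfl

lemma wordAct_cons (a : L) (l : List L) (A : B) :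
    wordAct S.θ (a :: l) A = wordAct S.θ l (S.θ a A) := rfl

lemma wordAct_append (u v : List L) (A : B) :
    wordAct S.θ (u ++ v) A = wordAct S.θ v (wordAct S.θ u A) := by
  simp [wordAct, List.foldl_append]

lemma wordAct_singleton (a : L) (A : B) : wordAct S.θ [a] A = S.θ a A := rfl

lemma wordAct_sdiff (β : List L) (X Y : B) :
    wordAct S.θ β (X \ Y) = wordAct S.θ β X \ wordAct S.θ β Y := by
  induction β generalizing X Y with
  | nil => rfl
  | cons a l ih => rw [wordAct_cons, wordAct_cons, wordAct_cons, S.map_sdiff, ih]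

lemma wordAct_sup (β : List L) (X Y : B) :
    wordAct S.θ β (X ⊔ Y) = wordAct S.θ β X ⊔ wordAct S.θ β Y := by
  induction β generalizing X Y with
  | nil => rfl
  | cons a l ih => rw [wordAct_cons, wordAct_cons, wordAct_cons, S.map_sup, ih]

lemma wordAct_inf (β : List L) (X Y : B) :
    wordAct S.θ β (X ⊓ Y) = wordAct S.θ β X ⊓ wordAct S.θ β Y := by
  induction β generalizing X Y with
  | nil => rfl
  | cons a l ih => rw [wordAct_cons, wordAct_cons, wordAct_cons, S.map_inf, ih]

lemma wordAct_bot (β : List L) : wordAct S.θ β (⊥ : B) = ⊥ := by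
  induction β with
  | nil => rfl
  | cons a l ih => rw [wordAct_cons, S.map_bot]; exact ih

lemma wordAct_mono (β : List L) {X Y : B} (h : X ≤ Y) :
    wordAct S.θ β X ≤ wordAct S.θ β Y := by
  have : wordAct S.θ β X ⊔ wordAct S.θ β Y = wordAct S.θ β Y := by
    rw [← wordAct_sup, sup_eq_right.mpr h]
  exact le_of_sup_eq this

variable {H : Set B}

lemma wordAct_mem_H (hHer : IsHereditary S H) (β : List L) {X : B} (hX : X ∈ H) :
    wordAct S.θ β X ∈ H := by
  induction β generalizing X with
  | nil => exact hX
  | cons a l ih => exact ih (hHer X hX a)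

lemma wordAct_qle (hI : IsBoolIdeal H) (hHer : IsHereditary S H) (β : List L) {X Y : B}
    (h : qle H X Y) : qle H (wordAct S.θ β X) (wordAct S.θ β Y) := by
  rw [qle_iff hI] at *
  rw [← wordAct_sdiff]
  exact wordAct_mem_H S hHer β h

lemma wordAct_relI (hI : IsBoolIdeal H) (hHer : IsHereditary S H) (β : List L) {X Y : B}
    (h : relI H X Y) : relI H (wordAct S.θ β X) (wordAct S.θ β Y) := by
  rw [relI_iff hI] at *
  rw [← wordAct_sdiff, ← wordAct_sdiff]
  exact ⟨wordAct_mem_H S hHer β h.1, wordAct_mem_H S hHer β h.2⟩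

end WordAct
end CT
namespace CT
variable {B : Type*} [GeneralizedBooleanAlgebra B]

/-- Prime filter theorem: a filter avoiding an ideal extends to a prime filter
avoiding the ideal. -/
lemma exists_primeFilter {H : Set B} (hI : IsBoolIdeal H) {A : B} (hA : A ∉ H) :
    ∃ η : Set B, IsBoolUltrafilter η ∧ A ∈ η ∧ ∀ x ∈ η, x ∉ H := by
  classical
  set 𝒮 : Set (Set B) := {F | IsBoolFilter F ∧ A ∈ F ∧ ∀ x ∈ F, x ∉ H} with h𝒮
  have hup : ∀ c ⊆ 𝒮, IsChain (· ⊆ ·) c → c.Nonempty → ∃ ub ∈ 𝒮, ∀ s ∈ c, s ⊆ ub := by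
    intro c hc hchain ⟨F₀, hF₀⟩
    refine ⟨⋃₀ c, ⟨⟨⟨A, Set.mem_sUnion.mpr ⟨F₀, hF₀, (hc hF₀).2.1⟩⟩, ?_, ?_, ?_⟩, 
      Set.mem_sUnion.mpr ⟨F₀, hF₀, (hc hF₀).2.1⟩, ?_⟩, fun s hs => Set.subset_sUnion_of_mem hs⟩
    · rintro ⟨F, hF, hbot⟩
      exact (hc hF).1.2.1 hbot
    · rintro a ⟨F, hF, ha⟩ b hab
      exact Set.mem_sUnion.mpr ⟨F, hF, (hc hF).1.2.2.1 a ha b hab⟩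
    · rintro a ⟨F, hF, ha⟩ b ⟨F', hF', hb⟩
      rcases hchain.total hF hF' with h | h
      · exact Set.mem_sUnion.mpr ⟨F', hF', (hc hF').1.2.2.2 a (h ha) b hb⟩
      · exact Set.mem_sUnion.mpr ⟨F, hF, (hc hF).1.2.2.2 a ha b (h hb)⟩
    · rintro x ⟨F, hF, hx⟩
      exact (hc hF).2.2 x hx
  have hbase : {x : B | A ≤ x} ∈ 𝒮 := by
    refine ⟨⟨⟨A, le_refl A⟩, ?_, fun a ha b hab => le_trans ha hab,
      fun a ha b hb => le_inf ha hb⟩, le_refl A, ?_⟩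
    · intro hbot
      exact hA (le_mem hI (bot_mem hI) (hbot))
    · intro x hx hxH
      exact hA (le_mem hI hxH hx)
  obtain ⟨M, -, hM⟩ := zorn_subset_nonempty 𝒮 hup _ hbase
  obtain ⟨⟨hMfil, hMA, hMH⟩ : M ∈ 𝒮, hMmax⟩ := hM
  refine ⟨M, ⟨hMfil, ?_⟩, hMA, hMH⟩
  -- primality
  intro a ha b b' hab
  by_contra hcon
  push_neg at hcon
  obtain ⟨hb, hb'⟩ := hcon
  have key : ∀ y : B, y ∉ M → (∃ f ∈ M, f ⊓ y ∈ H) := by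
    intro y hy
    set My : Set B := {x | ∃ f ∈ M, f ⊓ y ≤ x} with hMy
    have hMsub : M ⊆ My := fun f hf => ⟨f, hf, inf_le_left⟩
    have hyMy : y ∈ My := ⟨a, ha, inf_le_right⟩
    by_contra hnone
    push_neg at hnone
    have hMy𝒮 : My ∈ 𝒮 := by
      refine ⟨⟨⟨y, hyMy⟩, ?_, ?_, ?_⟩, hMsub hMA, ?_⟩
      · rintro ⟨f, hf, hbot⟩
        have : f ⊓ y ∈ H := le_mem hI (bot_mem hI) hbot
        exact hnone f hf this
      · rintro x ⟨f, hf, hx⟩ z hxz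
        exact ⟨f, hf, le_trans hx hxz⟩
      · rintro x ⟨f, hf, hx⟩ z ⟨f', hf', hz⟩
        exact ⟨f ⊓ f', hMfil.2.2.2 f hf f' hf', by
          calc f ⊓ f' ⊓ y ≤ (f ⊓ y) ⊓ (f' ⊓ y) := by
                simp only [le_inf_iff]
                exact ⟨⟨inf_le_left.trans inf_le_left, inf_le_right⟩,
                  ⟨inf_le_left.trans inf_le_right, inf_le_right⟩⟩
            _ ≤ x ⊓ z := inf_le_inf hx hz⟩
      · rintro x ⟨f, hf, hx⟩ hxH
        exact hnone f hf (le_mem hI hxH hx)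
    have := hMmax hMy𝒮 hMsub
    exact hy (this hyMy)
  obtain ⟨f, hf, hfb⟩ := key b hb
  obtain ⟨f', hf', hfb'⟩ := key b' hb'
  have hmem : f ⊓ f' ⊓ a ∈ M := hMfil.2.2.2 _ (hMfil.2.2.2 f hf f' hf') a ha
  apply hMH _ hmem
  have : f ⊓ f' ⊓ a = (f ⊓ f' ⊓ b) ⊔ (f ⊓ f' ⊓ b') := by rw [hab, inf_sup_left]
  rw [this]
  exact sup_mem hI (le_mem hI hfb (by
      simp only [le_inf_iff]
      exact ⟨inf_le_left.trans inf_le_left, inf_le_right⟩))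
    (le_mem hI hfb' (by
      simp only [le_inf_iff]
      exact ⟨inf_le_left.trans inf_le_right, inf_le_right⟩))

section EtaFacts
variable {H η : Set B} (hI : IsBoolIdeal H) (hη : IsBoolUltrafilter η)
  (hηH : ∀ x ∈ η, x ∉ H)

include hI hη hηH

lemma eta_up_qle {x y : B} (hx : x ∈ η) (hxy : qle H x y) : y ∈ η := by
  have hsplit : x = x ⊓ y ⊔ x \ y := (sup_inf_sdiff x y).symm
  rcases hη.2 x hx _ _ hsplit with h | h
  · exact hη.1.2.2.1 _ h y inf_le_right
  · exact absurd ((qle_iff hI).mp hxy) (hηH _ h)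

omit hI hηH in
lemma eta_up_le {x y : B} (hx : x ∈ η) (hxy : x ≤ y) : y ∈ η :=
  hη.1.2.2.1 x hx y hxy

lemma eta_iff_relI {x y : B} (hxy : relI H x y) : x ∈ η ↔ y ∈ η :=
  ⟨fun h => eta_up_qle hI hη hηH h (qle_of_relI hI hxy),
   fun h => eta_up_qle hI hη hηH h (qle_of_relI hI (relI_symm hI hxy))⟩

omit hI hηH in
lemma eta_inf {x y : B} (hx : x ∈ η) (hy : y ∈ η) : x ⊓ y ∈ η :=
  hη.1.2.2.2 x hx y hy

end EtaFacts
end CT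
namespace CT

/-- The segment of the infinite word `w` of length `b` starting at position `a`. -/
def seg {L : Type*} (w : ℕ → L) (a b : ℕ) : List L := (List.range b).map (fun j => w (a + j))

section Seg
variable {L : Type*} {w : ℕ → L}

lemma seg_zero (a : ℕ) : seg w a 0 = [] := rfl

lemma seg_succ (a b : ℕ) : seg w a (b+1) = seg w a b ++ [w (a+b)] := by
  simp [seg, List.range_succ]

lemma seg_one (a : ℕ) : seg w a 1 = [w a] := by
  simp [seg, List.range_succ]

lemma seg_length (a b : ℕ) : (seg w a b).length = b := by simp [seg]

lemma seg_append (a b c : ℕ) : seg w a b ++ seg w (a+b) c = seg w a (b+c) := by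
  simp only [seg, List.range_add, List.map_append, List.map_map]
  congr 1
  apply List.map_congr_left
  intro j _
  simp [Nat.add_assoc]

lemma seg_congr {a a' b : ℕ} (h : ∀ j, j < b → w (a+j) = w (a'+j)) :
    seg w a b = seg w a' b := by
  simp only [seg]
  apply List.map_congr_left
  intro j hj
  exact h j (List.mem_range.mp hj)

variable {n : ℕ} (hwper : ∀ t, w (t + n) = w t)
include hwper

lemma w_add_mul (k t : ℕ) : w (t + k*n) = w t := by
  induction k with
  | zero => simp
  | succ k ih => rw [Nat.succ_mul, ← Nat.add_assoc, hwper, ih]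

lemma w_of_dvd {a : ℕ} (h : n ∣ a) (j : ℕ) : w (a + j) = w j := by
  obtain ⟨k, rfl⟩ := h
  rw [Nat.add_comm, Nat.mul_comm]
  exact w_add_mul hwper k j

lemma seg_of_dvd {a : ℕ} (h : n ∣ a) (b : ℕ) : seg w a b = seg w 0 b :=
  seg_congr fun j _ => by rw [w_of_dvd hwper h j, Nat.zero_add]

end Seg

section Alpha
variable {L : Type*} {w : ℕ → L} {α : List L}
  (hwα : ∀ (t : ℕ) (h : t < α.length), α.get ⟨t, h⟩ = w t)
include hwα

lemma seg_eq_alpha : seg w 0 α.length = α := by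
  apply List.ext_getElem (by simp [seg_length])
  intro i h1 h2
  simp only [seg, List.getElem_map, List.getElem_range, Nat.zero_add]
  exact (hwα i h2).symm

lemma seg_eq_take {t : ℕ} (ht : t ≤ α.length) : seg w 0 t = α.take t := by
  apply List.ext_getElem (by simp [seg_length, ht])
  intro i h1 h2
  simp only [seg, List.getElem_map, List.getElem_range, Nat.zero_add, List.getElem_take]
  exact (hwα i (lt_of_lt_of_le (by simpa [seg_length] using h1) ht)).symm

end Alpha
end CT
namespace CT
set_option linter.unusedSectionVars false

section Core
variable {B L : Type*} [GeneralizedBooleanAlgebra B] {S : BoolDynSys B L} {H : Set B}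
  {α : List L} {A₀ : B} {w : ℕ → L}
  (hI : IsBoolIdeal H) (hHer : IsHereditary S H)
  (hα : α ≠ []) (hA₀ : A₀ ∉ H)
  (hwper : ∀ t, w (t + α.length) = w t)
  (hwα : ∀ (t : ℕ) (h : t < α.length), α.get ⟨t, h⟩ = w t)
  (hcyc : ∀ C, qle H C A₀ → relI H (wordAct S.θ α C) C)
  (hNE : ∀ t, 1 ≤ t → t ≤ α.length → ∀ C, C ∉ H →
      qle H C (wordAct S.θ (α.take t) A₀) →
      (S.θ (w t) C ∉ H ∧ ∀ b : L, S.θ b C ∉ H → b = w t))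

include hI hHer hα hA₀ hwper hwα hcyc hNE

lemma hn0 : 0 < α.length := List.length_pos_of_ne_nil hα

lemma w_mod (t : ℕ) : w (t % α.length) = w t := by
  conv_rhs => rw [← Nat.mod_add_div' t α.length]
  exact (w_add_mul hwper _ _).symm

/-- `P(t)`: the phase-`t` image of `A₀`. -/
local notation:max "P(" t ")" => wordAct S.θ (seg w 0 t) A₀

lemma L_C (t : ℕ) (C : B) (hC : qle H C A₀) :
    relI H (wordAct S.θ (seg w 0 (t + α.length)) C) (wordAct S.θ (seg w 0 t) C) := by
  induction t with
  | zero =>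
    rw [Nat.zero_add, seg_eq_alpha hwα]
    exact hcyc C hC
  | succ t ih =>
    have harr : t + 1 + α.length = (t + α.length) + 1 := by omega
    rw [harr, seg_succ, seg_succ, wordAct_append, wordAct_append, wordAct_singleton,
      wordAct_singleton, Nat.zero_add, Nat.zero_add, hwper t]
    have := wordAct_relI S hI hHer [w t] ih
    rwa [wordAct_singleton, wordAct_singleton] at this

lemma L_Cstar (k t : ℕ) (C : B) (hC : qle H C A₀) :
    relI H (wordAct S.θ (seg w 0 (t + k * α.length)) C) (wordAct S.θ (seg w 0 t) C) := by
  induction k with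
  | zero => simpa using relI_refl hI _
  | succ k ih =>
    have harr : t + (k+1) * α.length = (t + k * α.length) + α.length := by ring
    rw [harr]
    exact relI_trans hI (L_C hI hHer hα hA₀ hwper hwα hcyc hNE (t + k * α.length) C hC) ih

lemma L_Cdvd {m : ℕ} (hm : α.length ∣ m) (t : ℕ) (C : B) (hC : qle H C A₀) :
    relI H (wordAct S.θ (seg w 0 (t + m)) C) (wordAct S.θ (seg w 0 t) C) := by
  obtain ⟨k, rfl⟩ := hm
  rw [Nat.mul_comm]
  exact L_Cstar hI hHer hα hA₀ hwper hwα hcyc hNE k t C hC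

lemma L_Cmod (t : ℕ) (C : B) (hC : qle H C A₀) :
    relI H (wordAct S.θ (seg w 0 t) C) (wordAct S.θ (seg w 0 (t % α.length)) C) := by
  have := L_Cstar hI hHer hα hA₀ hwper hwα hcyc hNE (t / α.length) (t % α.length) C hC
  rwa [Nat.mod_add_div' t α.length] at this

lemma L_D' (u : ℕ) (X : B) (hX : X ∉ H) (hXP : qle H X (P(u))) :
    S.θ (w u) X ∉ H ∧ ∀ b : L, S.θ b X ∉ H → b = w u := by
  have hn := hn0 (S := S) hI hHer hα hA₀ hwper hwα hcyc hNE
  have hXP' : qle H X (P(u % α.length)) :=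
    qle_congr_right hI hXP (L_Cmod hI hHer hα hA₀ hwper hwα hcyc hNE u A₀
      (qle_of_le hI le_rfl))
  rcases Nat.eq_zero_or_pos (u % α.length) with h0 | hpos
  · rw [h0] at hXP'
    have hXA : qle H X A₀ := hXP'
    have hq : qle H X (wordAct S.θ (α.take α.length) A₀) := by
      rw [List.take_length]
      exact qle_congr_right hI hXA (relI_symm hI (hcyc A₀ (qle_of_le hI le_rfl)))
    have := hNE α.length hn le_rfl X hX hq
    have hwn : w α.length = w u := by
      have h1 : w α.length = w 0 := by have := hwper 0; simpa using this
      have h2 : w u = w 0 := by rw [← w_mod (S := S) hI hHer hα hA₀ hwper hwα hcyc hNE u, h0]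
      rw [h1, h2]
    rwa [hwn] at this
  · have hlt : u % α.length < α.length := Nat.mod_lt u hn
    have hq : qle H X (wordAct S.θ (α.take (u % α.length)) A₀) := by
      rwa [← seg_eq_take hwα (le_of_lt hlt)]
    have := hNE (u % α.length) hpos (le_of_lt hlt) X hX hq
    rwa [w_mod (S := S) hI hHer hα hA₀ hwper hwα hcyc hNE u] at this

lemma L_B' (j u : ℕ) (X : B) (hX : X ∉ H) (hXP : qle H X (P(u))) :
    wordAct S.θ (seg w u j) X ∉ H ∧
      qle H (wordAct S.θ (seg w u j) X) (P(u+j)) := by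
  induction j with
  | zero => exact ⟨hX, hXP⟩
  | succ j ih =>
    obtain ⟨h1, h2⟩ := ih
    have hD := L_D' hI hHer hα hA₀ hwper hwα hcyc hNE (u+j) _ h1 h2
    constructor
    · rw [seg_succ, wordAct_append, wordAct_singleton]
      exact hD.1
    · rw [seg_succ, wordAct_append, wordAct_singleton]
      have hq : qle H (S.θ (w (u+j)) (wordAct S.θ (seg w u j) X))
          (S.θ (w (u+j)) (P(u+j))) := by
        have := wordAct_qle S hI hHer [w (u+j)] h2
        rwa [wordAct_singleton, wordAct_singleton] at this
      have hPs : S.θ (w (u+j)) (P(u+j)) = P(u+j+1) := by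
        rw [seg_succ, wordAct_append, wordAct_singleton, Nat.zero_add]
      rwa [hPs] at hq

lemma L_I (s t : ℕ) (E : B) (hE : E ∉ H) (hEs : qle H E (P(s))) (hEt : qle H E (P(t))) :
    ∀ j, w (s+j) = w (t+j) := by
  have step : ∀ j, qle H (wordAct S.θ (seg w s j) E) (P(t+j)) → w (s+j) = w (t+j) := by
    intro j hQ
    obtain ⟨h1, h2⟩ := L_B' hI hHer hα hA₀ hwper hwα hcyc hNE j s E hE hEs
    have hDs := L_D' hI hHer hα hA₀ hwper hwα hcyc hNE (s+j) _ h1 h2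
    have hDt := L_D' hI hHer hα hA₀ hwper hwα hcyc hNE (t+j) _ h1 hQ
    exact hDt.2 _ hDs.1
  have key : ∀ j, qle H (wordAct S.θ (seg w s j) E) (P(t+j)) ∧ w (s+j) = w (t+j) := by
    intro j
    induction j with
    | zero => exact ⟨hEt, step 0 hEt⟩
    | succ j ih =>
      have hQ : qle H (wordAct S.θ (seg w s (j+1)) E) (P(t+(j+1))) := by
        rw [seg_succ, wordAct_append, wordAct_singleton, ih.2]
        have hq := wordAct_qle S hI hHer [w (t+j)] ih.1
        rw [wordAct_singleton, wordAct_singleton] at hq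
        have hPs : S.θ (w (t+j)) (P(t+j)) = P(t+j+1) := by
          rw [seg_succ, wordAct_append, wordAct_singleton, Nat.zero_add]
        rwa [hPs] at hq
      exact ⟨hQ, step (j+1) hQ⟩
  exact fun j => (key j).2

lemma L_C'' (u : ℕ) (E : B) (hE : qle H E (P(u))) :
    relI H (wordAct S.θ (seg w u α.length) E) E := by
  have hn := hn0 (S := S) hI hHer hα hA₀ hwper hwα hcyc hNE
  set n := α.length with hndef
  set ℓ := n - u % n with hℓdef
  have hu' : u % n < n := Nat.mod_lt u hn
  have hℓu : ℓ + u % n = n := by omega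
  have hdvd : n ∣ u + ℓ := by
    refine ⟨u / n + 1, ?_⟩
    have h1 : u % n + n * (u / n) = u := Nat.mod_add_div u n
    have h2 : n * (u / n + 1) = n * (u / n) + n := Nat.mul_succ n (u / n)
    rw [h2]
    omega
  set D := wordAct S.θ (seg w u ℓ) E with hDdef
  have hPadd : ∀ a b : ℕ, (P(a+b)) = wordAct S.θ (seg w a b) (P(a)) := by
    intro a b
    have hseg := seg_append (w := w) 0 a b
    rw [Nat.zero_add] at hseg
    rw [← wordAct_append, hseg]
  have hD : qle H D (P(u+ℓ)) := by
    rw [hPadd u ℓ]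
    exact wordAct_qle S hI hHer _ hE
  have hDA : qle H D A₀ := by
    refine qle_congr_right hI hD ?_
    have := L_Cdvd hI hHer hα hA₀ hwper hwα hcyc hNE hdvd 0 A₀ (qle_of_le hI le_rfl)
    simpa [seg_zero, wordAct_nil] using this
  set F := wordAct S.θ (seg w u n) E with hFdef
  -- Z = wordAct (seg u ℓ) F = wordAct α D
  have hsegZ : seg w u n ++ seg w u ℓ = seg w u ℓ ++ seg w (u+ℓ) n := by
    have e1 : seg w u ℓ = seg w (u+n) ℓ := by
      refine seg_congr fun j hj => ?_
      rw [show u + n + j = (u + j) + n by omega, hwper]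
    have e2 : seg w u n ++ seg w u ℓ = seg w u (n+ℓ) := by
      rw [e1]; exact seg_append u n ℓ
    have e3 : seg w u ℓ ++ seg w (u+ℓ) n = seg w u (ℓ+n) := seg_append u ℓ n
    rw [e2, e3, Nat.add_comm ℓ n]
  have hZ : wordAct S.θ (seg w u ℓ) F = wordAct S.θ α D := by
    rw [hFdef, ← wordAct_append, hsegZ, wordAct_append, ← hDdef]
    congr 1
    rw [seg_of_dvd hwper hdvd]
    exact seg_eq_alpha hwα
  have hZD : relI H (wordAct S.θ (seg w u ℓ) F) D := by
    rw [hZ]; exact hcyc D hDA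
  have hEF : E \ F ∈ H := by
    by_contra hcon
    have hq : qle H (E \ F) (P(u)) := qle_trans hI (qle_of_le hI sdiff_le) hE
    have := (L_B' hI hHer hα hA₀ hwper hwα hcyc hNE ℓ u (E \ F) hcon hq).1
    rw [wordAct_sdiff, ← hDdef] at this
    exact this ((qle_iff hI).mp (qle_of_relI hI (relI_symm hI hZD)))
  have hFP : qle H F (P(u)) := by
    have h1 : qle H F (P(u+n)) := by
      rw [hPadd u n]
      exact wordAct_qle S hI hHer _ hE
    exact qle_congr_right hI h1 (L_C hI hHer hα hA₀ hwper hwα hcyc hNE u A₀ (qle_of_le hI le_rfl))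
  have hFE : F \ E ∈ H := by
    by_contra hcon
    have hq : qle H (F \ E) (P(u)) := qle_trans hI (qle_of_le hI sdiff_le) hFP
    have := (L_B' hI hHer hα hA₀ hwper hwα hcyc hNE ℓ u (F \ E) hcon hq).1
    rw [wordAct_sdiff, ← hDdef] at this
    exact this ((qle_iff hI).mp (qle_of_relI hI hZD))
  exact (relI_iff hI).mpr ⟨hFE, hEF⟩


lemma L_E (β : List L) : ∀ (t : ℕ) (C : B), qle H C A₀ →
    wordAct S.θ β (wordAct S.θ (seg w 0 t) C) ∉ H → β = seg w t β.length := by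
  induction β with
  | nil => intro t C _ _; rw [List.length_nil, seg_zero]
  | cons b l ih =>
    intro t C hC hβ
    set X := wordAct S.θ (seg w 0 t) C with hX
    have hbX : S.θ b X ∉ H := fun h => hβ (by
      rw [wordAct_cons]; exact wordAct_mem_H S hHer l h)
    have hXH : X ∉ H := fun h => hbX (hHer X h b)
    have hXP : qle H X P(t) := by
      rw [hX]; exact wordAct_qle S hI hHer _ hC
    have hb : b = w t := (L_D' hI hHer hα hA₀ hwper hwα hcyc hNE t X hXH hXP).2 b hbX
    have hstep : S.θ b X = wordAct S.θ (seg w 0 (t+1)) C := by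
      rw [hb, hX, seg_succ, wordAct_append, wordAct_singleton, Nat.zero_add]
    have hl : l = seg w (t+1) l.length := by
      apply ih (t+1) C hC
      rw [← hstep]
      rw [wordAct_cons] at hβ
      exact hβ
    have hsegc : seg w t (l.length + 1) = w t :: seg w (t+1) l.length := by
      have h1 : seg w t 1 ++ seg w (t+1) l.length = seg w t (1 + l.length) :=
        seg_append t 1 _
      rw [seg_one] at h1
      rw [Nat.add_comm l.length 1, ← h1]
      rfl
    rw [List.length_cons, hsegc, hb, ← hl]

section Eta
variable {η : Set B} (hη : IsBoolUltrafilter η) (hηA : A₀ ∈ η) (hηH : ∀ x ∈ η, x ∉ H)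
/-- `Nmem t`: applying the first `t` letters maps `η`-subsets of `A₀` into `η`. -/
@[reducible] def NmemD (S' : BoolDynSys B L) (w' : ℕ → L) (A₀' : B) (η' : Set B) (t : ℕ) : Prop :=
  ∀ X ∈ η', X ≤ A₀' → wordAct S'.θ (seg w' 0 t) X ∈ η'

local notation:max "Nmem(" t ")" => NmemD S w A₀ η t

include hη hηA hηH

lemma L_N0 : Nmem(0) := fun X hX _ => hX

lemma L_Nn : Nmem(α.length) := by
  intro X hX hXA
  rw [seg_eq_alpha hwα]
  exact (eta_iff_relI hI hη hηH (hcyc X (qle_of_le hI hXA))).mpr hX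

lemma L_per (t : ℕ) (hN : Nmem(t)) : ∀ j, w (t + j) = w j := by
  have hE : A₀ ⊓ wordAct S.θ (seg w 0 t) A₀ ∈ η :=
    eta_inf hη hηA (hN A₀ hηA le_rfl)
  have h0 : qle H (A₀ ⊓ wordAct S.θ (seg w 0 t) A₀) P(0) := qle_of_le hI inf_le_left
  have ht : qle H (A₀ ⊓ wordAct S.θ (seg w 0 t) A₀) P(t) := qle_of_le hI inf_le_right
  intro j
  have := L_I hI hHer hα hA₀ hwper hwα hcyc hNE t 0 _ (hηH _ hE) ht h0 j
  rwa [Nat.zero_add] at this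

lemma L_H'' (u : ℕ) (hN : Nmem(u)) (E : B) (hEη : E ∈ η) (hE : qle H E P(u)) :
    wordAct S.θ (seg w u (α.length - u % α.length)) E ∈ η := by
  have hn := hn0 (S := S) hI hHer hα hA₀ hwper hwα hcyc hNE
  set n := α.length with hndef
  set ℓ := n - u % n with hℓdef
  have hu' : u % n < n := Nat.mod_lt u hn
  have hdvd : n ∣ u + ℓ := by
    refine ⟨u / n + 1, ?_⟩
    have h1 : u % n + n * (u / n) = u := Nat.mod_add_div u n
    have h2 : n * (u / n + 1) = n * (u / n) + n := Nat.mul_succ n (u / n)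
    rw [h2]
    omega
  set D := wordAct S.θ (seg w u ℓ) E with hDdef
  by_contra hD
  -- E is equivalent mod H to the image of D under the first u letters
  have hFE : relI H (wordAct S.θ (seg w u n) E) E := L_C'' hI hHer hα hA₀ hwper hwα hcyc hNE u E hE
  have hFD : wordAct S.θ (seg w u n) E = wordAct S.θ (seg w 0 (u % n)) D := by
    rw [hDdef, ← wordAct_append]
    congr 1
    have h1 : seg w u ℓ ++ seg w (u+ℓ) (u % n) = seg w u (ℓ + u % n) := seg_append u ℓ _
    rw [seg_of_dvd hwper hdvd] at h1
    rw [h1]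
    congr 1
    omega
  have hDA : qle H D A₀ := by
    have hD1 : qle H D P(u+ℓ) := by
      have hseg := seg_append (w := w) 0 u ℓ
      rw [Nat.zero_add] at hseg
      have : P(u+ℓ) = wordAct S.θ (seg w u ℓ) P(u) := by rw [← wordAct_append, hseg]
      rw [this]
      exact wordAct_qle S hI hHer _ hE
    refine qle_congr_right hI hD1 ?_
    have := L_Cdvd hI hHer hα hA₀ hwper hwα hcyc hNE hdvd 0 A₀ (qle_of_le hI le_rfl)
    simpa [seg_zero, wordAct_nil] using this
  have hET : relI H E (wordAct S.θ (seg w 0 u) D) := by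
    have h2 : relI H (wordAct S.θ (seg w 0 u) D) (wordAct S.θ (seg w 0 (u % n)) D) :=
      L_Cmod hI hHer hα hA₀ hwper hwα hcyc hNE u D hDA
    rw [← hFD] at h2
    exact relI_trans hI (relI_symm hI hFE) (relI_symm hI h2)
  -- prime splitting of A₀ along D
  have hsplit : A₀ = A₀ ⊓ D ⊔ A₀ \ D := (sup_inf_sdiff A₀ D).symm
  rcases hη.2 A₀ hηA _ _ hsplit with hc | hc
  · exact hD (eta_up_le hη hc inf_le_right)
  · have hW : wordAct S.θ (seg w 0 u) (A₀ \ D) ∈ η := hN _ hc sdiff_le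
    have hWE : wordAct S.θ (seg w 0 u) (A₀ \ D) ⊓ E ∈ η := eta_inf hη hW hEη
    apply hηH _ hWE
    rw [wordAct_sdiff]
    -- this meet is below E \ (image of D), which is in H
    have hET' : E \ wordAct S.θ (seg w 0 u) D ∈ H := ((relI_iff hI).mp hET).1
    refine le_mem hI hET' ?_
    refine le_sdiff.mpr ⟨inf_le_right, ?_⟩
    exact (disjoint_sdiff_self_left (x := wordAct S.θ (seg w 0 u) D)
      (y := P(u))).mono_left inf_le_left

lemma L_Nadd (s t : ℕ) (hNs : Nmem(s)) (hNt : Nmem(t)) : Nmem(s+t) := by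
  intro X hX hXA
  have hA1 : wordAct S.θ (seg w 0 t) X ∈ η := hNt X hX hXA
  have hA2 : wordAct S.θ (seg w 0 t) X ⊓ A₀ ∈ η := eta_inf hη hA1 hηA
  have hB : wordAct S.θ (seg w 0 s) (wordAct S.θ (seg w 0 t) X ⊓ A₀) ∈ η :=
    hNs _ hA2 inf_le_right
  refine eta_up_le hη hB ?_
  have h1 : wordAct S.θ (seg w 0 s) (wordAct S.θ (seg w 0 t) X ⊓ A₀) ≤
      wordAct S.θ (seg w 0 s) (wordAct S.θ (seg w 0 t) X) :=
    wordAct_mono S _ inf_le_left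
  have h2 : wordAct S.θ (seg w 0 s) (wordAct S.θ (seg w 0 t) X) =
      wordAct S.θ (seg w 0 (s+t)) X := by
    rw [← wordAct_append]
    congr 1
    have e1 : seg w 0 s = seg w t s :=
      seg_congr fun j hj => by
        rw [Nat.zero_add, L_per hI hHer hα hA₀ hwper hwα hcyc hNE hη hηA hηH t hNt j]
    have hseg := seg_append (w := w) 0 t s
    rw [Nat.zero_add] at hseg
    rw [e1, hseg, Nat.add_comm t s]
  rw [h2] at h1
  exact h1

lemma L_J (g : ℕ) (hNg : Nmem(g)) (X : B) (hXA : X ≤ A₀) (v : ℕ) (hgv : g ≤ v)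
    (hv : wordAct S.θ (seg w 0 v) X ∈ η) : wordAct S.θ (seg w 0 (v-g)) X ∈ η := by
  have hn := hn0 (S := S) hI hHer hα hA₀ hwper hwα hcyc hNE
  set n := α.length with hndef
  set E := wordAct S.θ (seg w 0 v) X ⊓ wordAct S.θ (seg w 0 g) A₀ with hEdef
  have hEη : E ∈ η := eta_inf hη hv (hNg A₀ hηA le_rfl)
  have hEv : qle H E P(v) :=
    qle_of_le hI (le_trans inf_le_left (wordAct_mono S _ hXA))
  have hEg : qle H E P(g) := qle_of_le hI inf_le_right
  have hlet : ∀ j, w (g + j) = w (v + j) := L_I hI hHer hα hA₀ hwper hwα hcyc hNE g v E (hηH _ hEη) hEg hEv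
  have hDη : wordAct S.θ (seg w g (n - g % n)) E ∈ η :=
    L_H'' hI hHer hα hA₀ hwper hwα hcyc hNE hη hηA hηH g hNg E hEη hEg
  set ℓ := n - g % n with hℓdef
  have hsegeq : seg w g ℓ = seg w v ℓ := seg_congr fun j _ => hlet j
  have hle : wordAct S.θ (seg w g ℓ) E ≤ wordAct S.θ (seg w 0 (v + ℓ)) X := by
    have h1 : wordAct S.θ (seg w g ℓ) E ≤ wordAct S.θ (seg w v ℓ) (wordAct S.θ (seg w 0 v) X) := by
      rw [hsegeq]
      exact wordAct_mono S _ inf_le_left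
    have h2 : wordAct S.θ (seg w v ℓ) (wordAct S.θ (seg w 0 v) X) =
        wordAct S.θ (seg w 0 (v + ℓ)) X := by
      rw [← wordAct_append]
      congr 1
      have hseg := seg_append (w := w) 0 v ℓ
      rwa [Nat.zero_add] at hseg
    rwa [h2] at h1
  have hdvd : n ∣ g + ℓ := by
    refine ⟨g / n + 1, ?_⟩
    have h1 : g % n + n * (g / n) = g := Nat.mod_add_div g n
    have h2 : n * (g / n + 1) = n * (g / n) + n := Nat.mul_succ n (g / n)
    rw [h2]
    have h3 : g % n < n := Nat.mod_lt g hn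
    omega
  have harr : v + ℓ = (v - g) + (g + ℓ) := by omega
  have hrel : relI H (wordAct S.θ (seg w 0 (v + ℓ)) X) (wordAct S.θ (seg w 0 (v - g)) X) := by
    have := L_Cdvd hI hHer hα hA₀ hwper hwα hcyc hNE hdvd (v - g) X (qle_of_le hI hXA)
    rwa [← harr] at this
  exact eta_up_qle hI hη hηH hDη (qle_congr_right hI (qle_of_le hI hle) hrel)

end Eta

end Core
end CT
/-- If `H` is a hereditary saturated ideal of `B` such that the quotient Boolean
dynamical system `(B/H, L, θ)` does not satisfy Condition (L), then there exists
a cyclic maximal tail `T` with `T ∩ H = ∅`. -/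
theorem cyclic_tail_of_quotient_not_L {B L : Type*} [GeneralizedBooleanAlgebra B]
    (S : BoolDynSys B L) (H : Set B) (hIdeal : IsBoolIdeal H)
    (hHer : IsHereditary S H) (hSat : IsSaturated S H)
    (hL : ¬ QConditionL S H) :
    ∃ T : Set B, IsCyclicMaximalTail S T ∧ T ∩ H = ∅ := by
  classical
  unfold QConditionL at hL
  push_neg at hL
  obtain ⟨α, A₀, hQC, hNoEx⟩ := hL
  obtain ⟨hα, hA₀, hcyc⟩ := hQC
  have hn : 0 < α.length := List.length_pos_of_ne_nil hα
  let w : ℕ → L := fun j => α.get ⟨j % α.length, Nat.mod_lt j hn⟩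
  have hwper : ∀ t, w (t + α.length) = w t := by
    intro t
    show α.get _ = α.get _
    congr 1
    exact Fin.ext (Nat.add_mod_right t α.length)
  have hwα : ∀ (t : ℕ) (h : t < α.length), α.get ⟨t, h⟩ = w t := by
    intro t h
    show _ = α.get _
    congr 1
    exact Fin.ext (Nat.mod_eq_of_lt h).symm
  unfold QHasExit at hNoEx
  push_neg at hNoEx
  have hNE : ∀ t, 1 ≤ t → t ≤ α.length → ∀ C, C ∉ H →
      qle H C (wordAct S.θ (α.take t) A₀) →
      (S.θ (w t) C ∉ H ∧ ∀ b, S.θ b C ∉ H → b = w t) := by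
    intro t h1 h2 C hC hq
    have hset := hNoEx t h1 h2 C hC hq
    have hwt : (α.get ⟨t % α.length, Nat.mod_lt t (Nat.lt_of_lt_of_le h1 h2)⟩) = w t := rfl
    constructor
    · have hmem : w t ∈ QDelta S H C := by
        rw [hset, ← hwt]
        exact Set.mem_singleton _
      exact hmem
    · intro b hb
      have hmem : b ∈ QDelta S H C := hb
      rw [hset, hwt] at hmem
      exact hmem
  obtain ⟨η, hη, hηA, hηH⟩ := CT.exists_primeFilter hIdeal hA₀
  have hNP : ∃ t, 0 < t ∧ CT.NmemD S w A₀ η t :=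
    ⟨α.length, hn, CT.L_Nn hIdeal hHer hα hA₀ hwper hwα hcyc hNE hη hηA hηH⟩
  set g := Nat.find hNP with hgdef
  have hg := Nat.find_spec hNP
  have hg0 : 0 < g := hg.1
  have hNg : CT.NmemD S w A₀ η g := hg.2
  have hgmin : ∀ m, m < g → ¬(0 < m ∧ CT.NmemD S w A₀ η m) := fun m hm => Nat.find_min hNP hm
  have hperg : ∀ t, w (t + g) = w t := by
    intro t
    rw [Nat.add_comm]
    exact CT.L_per hIdeal hHer hα hA₀ hwper hwα hcyc hNE hη hηA hηH g hNg t
  set γ := CT.seg w 0 g with hγdef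
  have hγlen : γ.length = g := CT.seg_length 0 g
  have hγne : γ ≠ [] := by
    intro hc
    rw [hc] at hγlen
    simp at hγlen
    omega
  have hpow : ∀ k, CT.seg w 0 (k * g) = wordPow γ k := by
    intro k
    induction k with
    | zero => simp [wordPow, CT.seg_zero]
    | succ k ih =>
      have h1 : (k+1) * g = g + k * g := by ring
      have hseg := CT.seg_append (w := w) 0 g (k * g)
      rw [Nat.zero_add] at hseg
      have h2 : CT.seg w g (k*g) = CT.seg w 0 (k*g) := CT.seg_of_dvd hperg (dvd_refl g) (k*g)
      rw [h1, ← hseg, h2, ih]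
      simp [wordPow, List.replicate_succ, hγdef]
  -- choose witnesses for non-membership at phases 1,…,g-1, and build A'
  have hXu : ∀ u : ℕ, ∃ X, X ∈ η ∧ X ≤ A₀ ∧
      ((0 < u ∧ u < g) → wordAct S.θ (CT.seg w 0 u) X ∉ η) := by
    intro u
    by_cases hc : 0 < u ∧ u < g
    · have hnN : ¬ CT.NmemD S w A₀ η u := fun hN => hgmin u hc.2 ⟨hc.1, hN⟩
      unfold CT.NmemD at hnN
      push_neg at hnN
      obtain ⟨X, hX1, hX2, hX3⟩ := hnN
      exact ⟨X, hX1, hX2, fun _ => hX3⟩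
    · exact ⟨A₀, hηA, le_rfl, fun h => absurd h hc⟩
  choose Xu hXu1 hXu2 hXu3 using hXu
  have hfold : ∀ (lst : List ℕ) (acc : B), acc ∈ η →
      ((lst.foldl (fun acc u => acc ⊓ Xu u) acc) ∈ η ∧
       (lst.foldl (fun acc u => acc ⊓ Xu u) acc) ≤ acc ∧
       ∀ u ∈ lst, (lst.foldl (fun acc u => acc ⊓ Xu u) acc) ≤ Xu u) := by
    intro lst
    induction lst with
    | nil => intro acc hacc; exact ⟨hacc, le_rfl, by simp⟩
    | cons v l ihl =>
      intro acc hacc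
      have h1 := ihl (acc ⊓ Xu v) (CT.eta_inf hη hacc (hXu1 v))
      refine ⟨h1.1, le_trans h1.2.1 inf_le_left, ?_⟩
      intro u hu
      rcases List.mem_cons.mp hu with rfl | hu
      · exact le_trans h1.2.1 inf_le_right
      · exact h1.2.2 u hu
  set A' := (List.range g).foldl (fun acc u => acc ⊓ Xu u) A₀ with hA'def
  obtain ⟨hA'η, hA'A₀, hA'Xu⟩ := hfold (List.range g) A₀ hηA
  have hA'bad : ∀ u, 0 < u → u < g → wordAct S.θ (CT.seg w 0 u) A' ∉ η := by
    intro u h0 hu hmem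
    have hle : A' ≤ Xu u := hA'Xu u (List.mem_range.mpr hu)
    exact hXu3 u ⟨h0, hu⟩ (CT.eta_up_le hη hmem (CT.wordAct_mono S _ hle))
  -- key strong induction: return times are multiples of g
  have K : ∀ v, ∀ C', C' ≤ A' → wordAct S.θ (CT.seg w 0 v) C' ∈ η → g ∣ v ∧ C' ∈ η := by
    intro v
    induction v using Nat.strong_induction_on with
    | _ v ih =>
      intro C' hC' hv
      rcases Nat.lt_or_ge v g with hlt | hge
      · rcases Nat.eq_zero_or_pos v with rfl | hpos
        · exact ⟨dvd_zero g, hv⟩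
        · exact absurd (CT.eta_up_le hη hv (CT.wordAct_mono S _ hC')) (hA'bad v hpos hlt)
      · have hsub := CT.L_J hIdeal hHer hα hA₀ hwper hwα hcyc hNE hη hηA hηH g hNg C'
          (le_trans hC' hA'A₀) v hge hv
        obtain ⟨hdvd, hCη⟩ := ih (v - g) (by omega) C' hC' hsub
        refine ⟨?_, hCη⟩
        have h := Nat.sub_add_cancel hge
        rw [← h]
        exact dvd_add hdvd (dvd_refl g)
  set T : Set B := {C | ∃ β, wordAct S.θ β C ∈ η} with hTdef
  have hmem : ∀ X : B, X ∈ T ↔ ∃ β, wordAct S.θ β X ∈ η := fun X => Iff.rfl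
  refine ⟨T, ⟨?_, ?_⟩, ?_⟩
  · -- the maximal tail conditions
    refine ⟨⟨A₀, (hmem A₀).mpr ⟨[], hηA⟩⟩, ?_, ?_, ?_, ?_, ?_, ?_⟩
    · intro hbot
      obtain ⟨β, hβ⟩ := (hmem ⊥).mp hbot
      rw [CT.wordAct_bot] at hβ
      exact hη.1.2.1 hβ
    · intro A a hAT
      obtain ⟨β, hβ⟩ := (hmem _).mp hAT
      exact (hmem A).mpr ⟨a :: β, hβ⟩
    · intro A C hT
      obtain ⟨β, hβ⟩ := (hmem _).mp hT
      rw [CT.wordAct_sup] at hβ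
      rcases hη.2 _ hβ _ _ rfl with h | h
      · exact Or.inl ((hmem A).mpr ⟨β, h⟩)
      · exact Or.inr ((hmem C).mpr ⟨β, h⟩)
    · intro A hAT C hAC
      obtain ⟨β, hβ⟩ := (hmem _).mp hAT
      exact (hmem C).mpr ⟨β, CT.eta_up_le hη hβ (CT.wordAct_mono S β hAC)⟩
    · intro A hAT _
      obtain ⟨β, hβ⟩ := (hmem _).mp hAT
      cases β with
      | cons b l => exact ⟨b, (hmem _).mpr ⟨l, hβ⟩⟩
      | nil =>
        obtain ⟨c, γ', hcγ⟩ := List.exists_cons_of_ne_nil hγne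
        have himg : wordAct S.θ γ (A ⊓ A₀) ∈ η :=
          hNg (A ⊓ A₀) (CT.eta_inf hη hβ hηA) inf_le_right
        have himg2 : wordAct S.θ γ A ∈ η :=
          CT.eta_up_le hη himg (CT.wordAct_mono S γ inf_le_left)
        rw [hcγ, CT.wordAct_cons] at himg2
        exact ⟨c, (hmem _).mpr ⟨γ', himg2⟩⟩
    · intro A₁ h1 A₂ h2
      obtain ⟨β₁, hb1⟩ := (hmem _).mp h1
      obtain ⟨β₂, hb2⟩ := (hmem _).mp h2
      refine ⟨wordAct S.θ β₁ A₁ ⊓ wordAct S.θ β₂ A₂,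
        (hmem _).mpr ⟨[], CT.eta_inf hη hb1 hb2⟩, ⟨β₁, inf_le_left⟩, ⟨β₂, inf_le_right⟩⟩
  · -- the cyclic data
    refine ⟨γ, η, A', ⟨hγne, hη, ?_⟩, hTdef, hA'η, ?_⟩
    · intro X hX
      have himg : wordAct S.θ γ (X ⊓ A₀) ∈ η :=
        hNg (X ⊓ A₀) (CT.eta_inf hη hX hηA) inf_le_right
      exact CT.eta_up_le hη himg (CT.wordAct_mono S γ inf_le_left)
    · intro β hβne C hC hCη
      have hCH : wordAct S.θ β C ∉ H := hηH _ hCη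
      have hforce : β = CT.seg w 0 β.length :=
        CT.L_E hIdeal hHer hα hA₀ hwper hwα hcyc hNE β 0 C
          (CT.qle_of_le hIdeal (le_trans hC hA'A₀)) hCH
      have hK := K β.length C hC (by rw [← hforce]; exact hCη)
      obtain ⟨⟨k, hk⟩, hCmem⟩ := hK
      have hkpos : 0 < k := by
        rcases Nat.eq_zero_or_pos k with rfl | h
        · exfalso
          rw [Nat.mul_zero] at hk
          exact hβne (List.length_eq_zero_iff.mp hk)
        · exact h
      refine ⟨hCmem, k, hkpos, ?_⟩
      rw [hforce, hk, Nat.mul_comm g k]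
      exact hpow k
  · -- disjointness from H
    apply Set.eq_empty_iff_forall_notMem.mpr
    rintro x ⟨hxT, hxH⟩
    obtain ⟨β, hβ⟩ := (hmem _).mp hxT
    exact hηH _ hβ (CT.wordAct_mem_H S hHer β hxH)
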